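/- Let x : [0,∞) → ℝ be continuous, π = (t_j) a partition of [0,∞) (finite on compacts), and f the difference of two convex functions with left-derivative f'_- and second derivative measure f''. Define the discrete local time L^π_t(u) := 2 Σ_{t_j ∈ π} 1_{⟦x_{t_j∧t}, x_{t_{j+1}∧t}⟧}(u) · |x_{t_{j+1}∧t} − u|, where ⟦u,v⟧ denotes [u,v) if u ≤ v and [v,u) if u > v. Then for all t ≥ 0: f(x_t) − f(x_0) = Σ_{t_j ∈ π} f'_-(x_{t_j})(x_{t_{j+1}∧t} − x_{t_j∧t}) + (1/2) ∫_ℝ L^π_t(u) f''(du). -/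

import Mathlib

open Filter Set MeasureTheory

/-- A partition of `[0,∞)`: an increasing sequence of times starting at `0` and
tending to `∞` (so it is finite on compacts). -/
def IsPartitionInf (π : ℕ → ℝ) : Prop :=
  π 0 = 0 ∧ StrictMono π ∧ Tendsto π atTop atTop

/-- The discrete local time
`L^π_t(u) := 2 Σ_j 1_{⟦x_{t_j∧t}, x_{t_{j+1}∧t}⟧}(u) · |x_{t_{j+1}∧t} − u|`,
where `⟦u,v⟧ = [u∧v, u∨v)`. -/
noncomputable def Ldisc (x : ℝ → ℝ) (π : ℕ → ℝ) (t u : ℝ) : ℝ :=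
  2 * ∑' j : ℕ,
    (Set.Ico (min (x (min (π j) t)) (x (min (π (j + 1)) t)))
             (max (x (min (π j) t)) (x (min (π (j + 1)) t)))).indicator
      (fun v => |x (min (π (j + 1)) t) - v|) u

private lemma slope_bounds {g g' : ℝ → ℝ} (hg : ConvexOn ℝ Set.univ g)
    (hg' : ∀ y : ℝ, HasDerivWithinAt g (g' y) (Set.Iio y) y)
    {c d : ℝ} (hcd : c < d) :
    g' c ≤ (g d - g c) / (d - c) ∧ (g d - g c) / (d - c) ≤ g' d := by
  constructor
  · have ht : Tendsto (slope g c) (nhdsWithin c (Iio c)) (nhds (g' c)) := by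
      have h := hasDerivWithinAt_iff_tendsto_slope.1 (hg' c)
      rwa [show Iio c \ {c} = Iio c from diff_singleton_eq_self (by simp)] at h
    refine le_of_tendsto ht ?_
    filter_upwards [self_mem_nhdsWithin] with u hu
    have h2 := hg.secant_mono (mem_univ c) (mem_univ u) (mem_univ d)
      (ne_of_lt hu) (ne_of_gt hcd) (le_of_lt (lt_trans hu hcd))
    rw [slope_def_field]
    exact h2
  · have ht : Tendsto (slope g d) (nhdsWithin d (Iio d)) (nhds (g' d)) := by
      have h := hasDerivWithinAt_iff_tendsto_slope.1 (hg' d)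
      rwa [show Iio d \ {d} = Iio d from diff_singleton_eq_self (by simp)] at h
    refine ge_of_tendsto ht ?_
    have hmem : Ioo c d ∈ nhdsWithin d (Iio d) := Ioo_mem_nhdsLT_of_mem ⟨hcd, le_refl d⟩
    filter_upwards [hmem] with u hu
    have h2 := hg.secant_mono (mem_univ d) (mem_univ c) (mem_univ u)
      (ne_of_lt hcd) (ne_of_lt hu.2) (le_of_lt hu.1)
    rw [slope_def_field]
    calc (g d - g c) / (d - c) = (g c - g d) / (c - d) := by
          rw [← neg_div_neg_eq]; ring_nf
      _ ≤ (g u - g d) / (u - d) := h2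

private lemma leftDeriv_mono {g g' : ℝ → ℝ} (hg : ConvexOn ℝ Set.univ g)
    (hg' : ∀ y : ℝ, HasDerivWithinAt g (g' y) (Set.Iio y) y) : Monotone g' := by
  intro c d hcd
  rcases eq_or_lt_of_le hcd with rfl | h
  · exact le_rfl
  · exact le_trans (slope_bounds hg hg' h).1 (slope_bounds hg hg' h).2

private lemma convex_ftc {g g' : ℝ → ℝ} (hg : ConvexOn ℝ Set.univ g)
    (hg' : ∀ y : ℝ, HasDerivWithinAt g (g' y) (Set.Iio y) y)
    {a b : ℝ} (hab : a ≤ b) :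
    ∫ s in a..b, g' s = g b - g a := by
  have hgc : Continuous g := continuousOn_univ.1 (hg.continuousOn isOpen_univ)
  have hmono := leftDeriv_mono hg hg'
  have key : ∫ y in (-b)..(-a), (fun y => g' (-y)) y
      = (fun y => -g (-y)) (-a) - (fun y => -g (-y)) (-b) := by
    refine intervalIntegral.integral_eq_sub_of_hasDeriv_right_of_le (f := fun y => -g (-y))
        (f' := fun y => g' (-y)) (neg_le_neg hab) ?_ ?_ ?_
    · exact ((hgc.comp continuous_neg).neg).continuousOn
    · intro y _
      have hmap : MapsTo (fun z : ℝ => -z) (Ioi y) (Iio (-y)) := fun z hz => by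
        simpa using neg_lt_neg (mem_Ioi.1 hz)
      have h1 : HasDerivWithinAt (fun z => g (-z)) (g' (-y) * (-1)) (Ioi y) y :=
        HasDerivWithinAt.comp y (hg' (-y)) ((hasDerivAt_neg y).hasDerivWithinAt) hmap
      simpa [Pi.neg_def] using h1.neg
    · exact Antitone.intervalIntegrable (fun u v huv => hmono (neg_le_neg huv))
  have hcn := intervalIntegral.integral_comp_neg (a := -b) (b := -a) (fun s => g' s)
  simp only [neg_neg] at hcn key
  rw [← hcn, key]
  ring

private lemma tanaka_step {g g' : ℝ → ℝ} {ν : Measure ℝ} (hg : ConvexOn ℝ Set.univ g)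
    (hg' : ∀ y : ℝ, HasDerivWithinAt g (g' y) (Set.Iio y) y)
    (hν : ∀ c d : ℝ, c ≤ d → ν (Set.Ico c d) = ENNReal.ofReal (g' d - g' c))
    (a b : ℝ) :
    ∫ u, (Set.Ico (min a b) (max a b)).indicator (fun v => |b - v|) u ∂ν
      = g b - g a - g' a * (b - a) := by
  have hmono := leftDeriv_mono hg hg'
  have hg'meas : Measurable g' := hmono.measurable
  rcases le_or_gt a b with hab | hba
  · -- case a ≤ b
    rw [min_eq_left hab, max_eq_right hab]
    have hind : (Ico a b).indicator (fun v => |b - v|) = (Ico a b).indicator (fun v => b - v) :=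
      indicator_congr fun v hv => abs_of_nonneg (by linarith [hv.2])
    rw [hind, integral_indicator measurableSet_Ico]
    have hfin : ν (Ico a b) ≠ ⊤ := by rw [hν a b hab]; exact ENNReal.ofReal_ne_top
    have hInt : IntegrableOn (fun u => b - u) (Ico a b) ν := by
      refine Measure.integrableOn_of_bounded (M := b - a) hfin
        ((continuous_const.sub continuous_id).aestronglyMeasurable) ?_
      refine (ae_restrict_iff' measurableSet_Ico).2 (Eventually.of_forall fun u hu => ?_)
      rw [Real.norm_eq_abs, abs_of_nonneg (by linarith [hu.2])]
      linarith [hu.1]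
    have hnn : 0 ≤ᵐ[ν.restrict (Ico a b)] fun u => b - u :=
      (ae_restrict_iff' measurableSet_Ico).2
        (Eventually.of_forall fun u hu => by simp; linarith [hu.2])
    set χ : ℝ → ℝ := (Ico a b).indicator (fun s => g' s - g' a) with hχ
    have hχnn : ∀ s, 0 ≤ χ s := fun s => by
      rw [hχ]
      by_cases hs : s ∈ Ico a b
      · rw [indicator_of_mem hs]; exact sub_nonneg.2 (hmono hs.1)
      · rw [indicator_of_notMem hs]
    have hχint : Integrable χ volume := by
      rw [hχ, integrable_indicator_iff measurableSet_Ico]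
      refine Measure.integrableOn_of_bounded (M := |g' b| + |g' a|)
        (by simp [Real.volume_Ico]) ((hg'meas.sub measurable_const).aestronglyMeasurable) ?_
      refine (ae_restrict_iff' measurableSet_Ico).2 (Eventually.of_forall fun s hs => ?_)
      have h1 : g' a ≤ g' s := hmono hs.1
      have h2 : g' s ≤ g' b := hmono (le_of_lt hs.2)
      rw [Real.norm_eq_abs, abs_of_nonneg (by linarith)]
      have h3 := le_abs_self (g' b)
      have h4 := neg_abs_le (g' a)
      linarith
    have key : ENNReal.ofReal (∫ u in Ico a b, (b - u) ∂ν) = ENNReal.ofReal (∫ s, χ s) := by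
      rw [ofReal_integral_eq_lintegral_ofReal hInt hnn]
      rw [lintegral_eq_lintegral_meas_lt (ν.restrict (Ico a b)) hnn
        ((continuous_const.sub continuous_id).measurable.aemeasurable)]
      have hset : ∀ t ∈ Ioi (0:ℝ),
          (ν.restrict (Ico a b)) {u | t < b - u} = ENNReal.ofReal (χ (b - t)) := by
        intro t ht
        have h0 : {u : ℝ | t < b - u} = Iio (b - t) := by
          ext u; simp only [mem_setOf_eq, mem_Iio]; constructor <;> intro <;> linarith
        rw [h0, Measure.restrict_apply measurableSet_Iio]
        have hseteq : Iio (b - t) ∩ Ico a b = Ico a (max a (b - t)) := by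
          ext u
          simp only [mem_inter_iff, mem_Iio, mem_Ico, lt_max_iff, mem_Ioi] at *
          constructor
          · rintro ⟨h1, h2, h3⟩; exact ⟨h2, Or.inr h1⟩
          · rintro ⟨h1, h2 | h2⟩
            · linarith
            · exact ⟨by linarith, h1, by linarith⟩
        rw [hseteq, hν a _ (le_max_left _ _)]
        congr 1
        by_cases h : a ≤ b - t
        · have hbt : b - t < b := by simp only [mem_Ioi] at ht; linarith
          rw [max_eq_right h, hχ, indicator_of_mem (mem_Ico.2 ⟨h, hbt⟩)]
        · rw [max_eq_left (le_of_not_ge h), hχ,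
            indicator_of_notMem (fun hm => h hm.1)]
          simp
      rw [setLIntegral_congr_fun measurableSet_Ioi hset]
      have hext : ∀ t : ℝ, (Ioi (0:ℝ)).indicator (fun t => ENNReal.ofReal (χ (b - t))) t
          = ENNReal.ofReal (χ (b - t)) := by
        intro t
        by_cases ht : t ∈ Ioi (0:ℝ)
        · rw [indicator_of_mem ht]
        · rw [indicator_of_notMem ht]
          have h5 : χ (b - t) = 0 := by
            rw [hχ, indicator_of_notMem]
            intro hm
            simp only [mem_Ioi, not_lt] at ht
            exact absurd hm.2 (by linarith)
          simp [h5]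
      rw [← lintegral_indicator measurableSet_Ioi]
      simp_rw [hext]
      have hΦint : Integrable (fun t => χ (b - t)) volume := hχint.comp_sub_left b
      have hΦnn : 0 ≤ᵐ[volume] fun t => χ (b - t) := Eventually.of_forall fun t => hχnn _
      rw [← ofReal_integral_eq_lintegral_ofReal hΦint hΦnn]
      rw [integral_sub_left_eq_self χ volume b]
    have hχval : ∫ s, χ s = g b - g a - g' a * (b - a) := by
      rw [hχ, integral_indicator measurableSet_Ico, integral_Ico_eq_integral_Ioo, ← integral_Ioc_eq_integral_Ioo,
        ← intervalIntegral.integral_of_le hab,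
        intervalIntegral.integral_sub hmono.intervalIntegrable intervalIntegrable_const,
        convex_ftc hg hg' hab, intervalIntegral.integral_const]
      simp only [smul_eq_mul]
      ring
    have hI0 : 0 ≤ ∫ u in Ico a b, (b - u) ∂ν := integral_nonneg_of_ae hnn
    have hJ0 : 0 ≤ ∫ s, χ s := integral_nonneg hχnn
    rw [(ENNReal.ofReal_eq_ofReal_iff hI0 hJ0).1 key, hχval]
  · -- case b < a
    rw [min_eq_right hba.le, max_eq_left hba.le]
    have hind : (Ico b a).indicator (fun v => |b - v|) = (Ico b a).indicator (fun v => v - b) :=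
      indicator_congr fun v hv => by rw [abs_of_nonpos (by linarith [hv.1]), neg_sub]
    rw [hind, integral_indicator measurableSet_Ico]
    have hfin : ν (Ico b a) ≠ ⊤ := by rw [hν b a hba.le]; exact ENNReal.ofReal_ne_top
    have hInt : IntegrableOn (fun u => u - b) (Ico b a) ν := by
      refine Measure.integrableOn_of_bounded (M := a - b) hfin
        ((continuous_id.sub continuous_const).aestronglyMeasurable) ?_
      refine (ae_restrict_iff' measurableSet_Ico).2 (Eventually.of_forall fun u hu => ?_)
      rw [Real.norm_eq_abs, abs_of_nonneg (by linarith [hu.1])]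
      linarith [hu.2]
    have hnn : 0 ≤ᵐ[ν.restrict (Ico b a)] fun u => u - b :=
      (ae_restrict_iff' measurableSet_Ico).2
        (Eventually.of_forall fun u hu => by simp; linarith [hu.1])
    set χ : ℝ → ℝ := (Ioc b a).indicator (fun s => g' a - g' s) with hχ
    have hχnn : ∀ s, 0 ≤ χ s := fun s => by
      rw [hχ]
      by_cases hs : s ∈ Ioc b a
      · rw [indicator_of_mem hs]; exact sub_nonneg.2 (hmono hs.2)
      · rw [indicator_of_notMem hs]
    have hχint : Integrable χ volume := by
      rw [hχ, integrable_indicator_iff measurableSet_Ioc]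
      refine Measure.integrableOn_of_bounded (M := |g' a| + |g' b|)
        (by simp [Real.volume_Ioc]) ((measurable_const.sub hg'meas).aestronglyMeasurable) ?_
      refine (ae_restrict_iff' measurableSet_Ioc).2 (Eventually.of_forall fun s hs => ?_)
      have h1 : g' s ≤ g' a := hmono hs.2
      have h2 : g' b ≤ g' s := hmono (le_of_lt hs.1)
      rw [Real.norm_eq_abs, abs_of_nonneg (by linarith)]
      have h3 := le_abs_self (g' a)
      have h4 := neg_abs_le (g' b)
      linarith
    have key : ENNReal.ofReal (∫ u in Ico b a, (u - b) ∂ν) = ENNReal.ofReal (∫ s, χ s) := by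
      rw [ofReal_integral_eq_lintegral_ofReal hInt hnn]
      rw [lintegral_eq_lintegral_meas_le (ν.restrict (Ico b a)) hnn
        ((continuous_id.sub continuous_const).measurable.aemeasurable)]
      have hset : ∀ t ∈ Ioi (0:ℝ),
          (ν.restrict (Ico b a)) {u | t ≤ u - b} = ENNReal.ofReal (χ (b + t)) := by
        intro t ht
        simp only [mem_Ioi] at ht
        have h0 : {u : ℝ | t ≤ u - b} = Ici (b + t) := by
          ext u; simp only [mem_setOf_eq, mem_Ici]; constructor <;> intro <;> linarith
        rw [h0, Measure.restrict_apply measurableSet_Ici]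
        have hseteq : Ici (b + t) ∩ Ico b a = Ico (min a (b + t)) a := by
          ext u
          simp only [mem_inter_iff, mem_Ici, mem_Ico, min_le_iff]
          constructor
          · rintro ⟨h1, h2, h3⟩; exact ⟨Or.inr h1, h3⟩
          · rintro ⟨h1 | h1, h2⟩
            · linarith
            · exact ⟨h1, by linarith, h2⟩
        rw [hseteq, hν _ a (min_le_left _ _)]
        congr 1
        by_cases h : b + t ≤ a
        · rw [min_eq_right h, hχ, indicator_of_mem (mem_Ioc.2 ⟨by linarith, h⟩)]
        · rw [min_eq_left (le_of_not_ge h), hχ,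
            indicator_of_notMem (fun hm => h hm.2)]
          simp
      rw [setLIntegral_congr_fun measurableSet_Ioi hset]
      have hext : ∀ t : ℝ, (Ioi (0:ℝ)).indicator (fun t => ENNReal.ofReal (χ (b + t))) t
          = ENNReal.ofReal (χ (b + t)) := by
        intro t
        by_cases ht : t ∈ Ioi (0:ℝ)
        · rw [indicator_of_mem ht]
        · rw [indicator_of_notMem ht]
          have h5 : χ (b + t) = 0 := by
            rw [hχ, indicator_of_notMem]
            intro hm
            simp only [mem_Ioi, not_lt] at ht
            have := hm.1
            linarith
          simp [h5]
      rw [← lintegral_indicator measurableSet_Ioi]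
      simp_rw [hext]
      have hΦint : Integrable (fun t => χ (b + t)) volume := hχint.comp_add_left b
      have hΦnn : 0 ≤ᵐ[volume] fun t => χ (b + t) := Eventually.of_forall fun t => hχnn _
      rw [← ofReal_integral_eq_lintegral_ofReal hΦint hΦnn]
      rw [integral_add_left_eq_self χ b]
    have hχval : ∫ s, χ s = g b - g a - g' a * (b - a) := by
      rw [hχ, integral_indicator measurableSet_Ioc,
        ← intervalIntegral.integral_of_le hba.le,
        intervalIntegral.integral_sub intervalIntegrable_const hmono.intervalIntegrable,
        convex_ftc hg hg' hba.le, intervalIntegral.integral_const]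
      simp only [smul_eq_mul]
      ring
    have hI0 : 0 ≤ ∫ u in Ico b a, (u - b) ∂ν := integral_nonneg_of_ae hnn
    have hJ0 : 0 ≤ ∫ s, χ s := integral_nonneg hχnn
    rw [(ENNReal.ofReal_eq_ofReal_iff hI0 hJ0).1 key, hχval]

private lemma ind_integrable {ν : Measure ℝ} (hfin : ∀ c d : ℝ, ν (Set.Ico c d) ≠ ⊤)
    (m M bb : ℝ) :
    Integrable ((Set.Ico m M).indicator fun v => |bb - v|) ν := by
  rw [integrable_indicator_iff measurableSet_Ico]
  refine Measure.integrableOn_of_bounded (M := |bb| + (|m| + |M|)) (hfin m M)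
    ((continuous_const.sub continuous_id).abs.aestronglyMeasurable) ?_
  refine (ae_restrict_iff' measurableSet_Ico).2 (Eventually.of_forall fun u hu => ?_)
  rw [Real.norm_eq_abs, abs_abs]
  have h1 : |u| ≤ max |m| |M| := abs_le_max_abs_abs hu.1 hu.2.le
  have h2 : max |m| |M| ≤ |m| + |M| :=
    max_le (le_add_of_nonneg_right (abs_nonneg _)) (le_add_of_nonneg_left (abs_nonneg _))
  calc |bb - u| ≤ |bb| + |u| := abs_sub bb u
    _ ≤ |bb| + (|m| + |M|) := by linarith

theorem discrete_tanaka_meyer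
    (x : ℝ → ℝ) (π : ℕ → ℝ) (g h g' h' : ℝ → ℝ) (νg νh : Measure ℝ)
    (hx : Continuous x) (hπ : IsPartitionInf π)
    (hg : ConvexOn ℝ Set.univ g) (hh : ConvexOn ℝ Set.univ h)
    (hg' : ∀ y : ℝ, HasDerivWithinAt g (g' y) (Set.Iio y) y)
    (hh' : ∀ y : ℝ, HasDerivWithinAt h (h' y) (Set.Iio y) y)
    (hνg : ∀ c d : ℝ, c ≤ d → νg (Set.Ico c d) = ENNReal.ofReal (g' d - g' c))
    (hνh : ∀ c d : ℝ, c ≤ d → νh (Set.Ico c d) = ENNReal.ofReal (h' d - h' c)) :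
    ∀ t : ℝ, 0 ≤ t →
      (g (x t) - h (x t)) - (g (x 0) - h (x 0)) =
        (∑' j : ℕ, (g' (x (π j)) - h' (x (π j))) *
          (x (min (π (j + 1)) t) - x (min (π j) t))) +
        (1 / 2) * ((∫ u, Ldisc x π t u ∂νg) - (∫ u, Ldisc x π t u ∂νh)) := by
  obtain ⟨hπ0, hπmono, hπtop⟩ := hπ
  intro t ht
  obtain ⟨N, hN⟩ := (hπtop.eventually_ge_atTop t).exists
  have hmin : ∀ j, N ≤ j → min (π j) t = t :=
    fun j hj => min_eq_right (hN.trans (hπmono.monotone hj))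
  have hfing : ∀ c d : ℝ, νg (Set.Ico c d) ≠ ⊤ := by
    intro c d
    rcases le_or_gt c d with hcd | hcd
    · rw [hνg c d hcd]; exact ENNReal.ofReal_ne_top
    · rw [Set.Ico_eq_empty (not_lt.2 hcd.le)]; simp
  have hfinh : ∀ c d : ℝ, νh (Set.Ico c d) ≠ ⊤ := by
    intro c d
    rcases le_or_gt c d with hcd | hcd
    · rw [hνh c d hcd]; exact ENNReal.ofReal_ne_top
    · rw [Set.Ico_eq_empty (not_lt.2 hcd.le)]; simp
  -- rewrite the integrals of Ldisc as finite sums of integrals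
  have hL : ∀ (ν : Measure ℝ), (∀ c d : ℝ, ν (Set.Ico c d) ≠ ⊤) →
      ∫ u, Ldisc x π t u ∂ν = 2 * ∑ j ∈ Finset.range N,
        ∫ u, (Set.Ico (min (x (min (π j) t)) (x (min (π (j + 1)) t)))
              (max (x (min (π j) t)) (x (min (π (j + 1)) t)))).indicator
              (fun v => |x (min (π (j + 1)) t) - v|) u ∂ν := by
    intro ν hfin
    have hfun : ∀ u, Ldisc x π t u = 2 * ∑ j ∈ Finset.range N,
        (Set.Ico (min (x (min (π j) t)) (x (min (π (j + 1)) t)))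
          (max (x (min (π j) t)) (x (min (π (j + 1)) t)))).indicator
          (fun v => |x (min (π (j + 1)) t) - v|) u := by
      intro u
      unfold Ldisc
      congr 1
      refine tsum_eq_sum fun j hj => ?_
      have hj' : N ≤ j := le_of_not_gt (fun hc => hj (Finset.mem_range.2 hc))
      rw [hmin j hj', hmin (j + 1) (hj'.trans (Nat.le_succ j))]
      simp
    simp_rw [hfun]
    rw [integral_const_mul, integral_finset_sum _ (fun j _ => ind_integrable hfin _ _ _)]
  -- rewrite the tsum as a finite sum
  have hS : (∑' j : ℕ, (g' (x (π j)) - h' (x (π j))) *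
        (x (min (π (j + 1)) t) - x (min (π j) t)))
      = ∑ j ∈ Finset.range N, (g' (x (π j)) - h' (x (π j))) *
        (x (min (π (j + 1)) t) - x (min (π j) t)) := by
    refine tsum_eq_sum fun j hj => ?_
    have hj' : N ≤ j := le_of_not_gt (fun hc => hj (Finset.mem_range.2 hc))
    rw [hmin j hj', hmin (j + 1) (hj'.trans (Nat.le_succ j))]
    simp
  -- per-step identity
  have hstep : ∀ j : ℕ,
      (g' (x (π j)) - h' (x (π j))) * (x (min (π (j + 1)) t) - x (min (π j) t))
      + ((∫ u, (Set.Ico (min (x (min (π j) t)) (x (min (π (j + 1)) t)))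
              (max (x (min (π j) t)) (x (min (π (j + 1)) t)))).indicator
              (fun v => |x (min (π (j + 1)) t) - v|) u ∂νg)
        - (∫ u, (Set.Ico (min (x (min (π j) t)) (x (min (π (j + 1)) t)))
              (max (x (min (π j) t)) (x (min (π (j + 1)) t)))).indicator
              (fun v => |x (min (π (j + 1)) t) - v|) u ∂νh))
      = (g (x (min (π (j + 1)) t)) - h (x (min (π (j + 1)) t)))
        - (g (x (min (π j) t)) - h (x (min (π j) t))) := by
    intro j
    rw [tanaka_step hg hg' hνg (x (min (π j) t)) (x (min (π (j + 1)) t)),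
      tanaka_step hh hh' hνh (x (min (π j) t)) (x (min (π (j + 1)) t))]
    rcases le_or_gt (π j) t with hj | hj
    · rw [min_eq_left hj]; ring
    · have h1 : min (π j) t = t := min_eq_right hj.le
      have h2 : min (π (j + 1)) t = t := min_eq_right (hj.le.trans (hπmono (Nat.lt_succ_self j)).le)
      rw [h1, h2]; ring
  rw [hS, hL νg hfing, hL νh hfinh]
  have hcalc : ∀ X Y : ℝ,
      (∑ j ∈ Finset.range N, (g' (x (π j)) - h' (x (π j))) *
        (x (min (π (j + 1)) t) - x (min (π j) t))) + 1 / 2 * (2 * X - 2 * Y)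
      = (∑ j ∈ Finset.range N, (g' (x (π j)) - h' (x (π j))) *
        (x (min (π (j + 1)) t) - x (min (π j) t))) + (X - Y) := by
    intro X Y; ring
  rw [hcalc, ← Finset.sum_sub_distrib, ← Finset.sum_add_distrib,
    Finset.sum_congr rfl (fun j _ => hstep j),
    Finset.sum_range_sub (fun j => g (x (min (π j) t)) - h (x (min (π j) t)))]
  rw [hmin N le_rfl, hπ0, min_eq_left ht]
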